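/- Let k be an algebraically closed field and R a standard graded quadratic k-algebra with dim_k R_2 = 1, no socle elements in degree 1, and R not Artinian. Then R is isomorphic to a polynomial ring in one variable over k (i.e., dim_k R_1 = 1). -/

import Mathlib

open MvPolynomial

/-- The degree-`i` homogeneous component of the standard graded algebra
`R = k[x₁,…,xₙ]/I`, realized as the image of the homogeneous polynomials of degree `i`
in the quotient. -/
noncomputable def quadPiece (k : Type*) [Field k] (n : ℕ)
    (I : Ideal (MvPolynomial (Fin n) k)) (i : ℕ) :
    Submodule k (MvPolynomial (Fin n) k ⧸ I) :=
  (MvPolynomial.homogeneousSubmodule (Fin n) k i).map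
    (Ideal.Quotient.mkₐ k I).toLinearMap


section Aux

variable {k : Type*} [Field k] {n : ℕ} {I : Ideal (MvPolynomial (Fin n) k)}

lemma mem_quadPiece {i : ℕ} {x : MvPolynomial (Fin n) k ⧸ I} :
    x ∈ quadPiece k n I i ↔
      ∃ p : MvPolynomial (Fin n) k, p.IsHomogeneous i ∧ Ideal.Quotient.mk I p = x := by
  simp only [quadPiece, Submodule.mem_map, mem_homogeneousSubmodule,
    AlgHom.toLinearMap_apply, Ideal.Quotient.mkₐ_eq_mk]

lemma quadPiece_mul {i j : ℕ} {x y : MvPolynomial (Fin n) k ⧸ I}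
    (hx : x ∈ quadPiece k n I i) (hy : y ∈ quadPiece k n I j) :
    x * y ∈ quadPiece k n I (i + j) := by
  rw [mem_quadPiece] at hx hy ⊢
  obtain ⟨p, hp, rfl⟩ := hx
  obtain ⟨q, hq, rfl⟩ := hy
  exact ⟨p * q, hp.mul hq, map_mul _ _ _⟩

lemma monomial_split {d : Fin n →₀ ℕ} {m : ℕ} (hd : d.degree = m + 1) (c : k) :
    ∃ (i : Fin n) (d' : Fin n →₀ ℕ), d'.degree = m ∧
      (monomial d c : MvPolynomial (Fin n) k) = X i * monomial d' c := by
  have hd0 : d ≠ 0 := by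
    intro h
    rw [h] at hd
    simp at hd
  obtain ⟨i, hi⟩ : ∃ i, d i ≠ 0 := by
    by_contra h
    push_neg at h
    exact hd0 (Finsupp.ext fun a => h a)
  set d' := d - Finsupp.single i 1 with hd'
  have hsum : Finsupp.single i 1 + d' = d := by
    ext a
    simp only [Finsupp.add_apply, Finsupp.tsub_apply, hd']
    rcases eq_or_ne a i with rfl | ha
    · simp only [Finsupp.single_eq_same]
      omega
    · simp [Finsupp.single_eq_of_ne' (Ne.symm ha)]
  have hdeg : d'.degree = m := by
    have h1 : (Finsupp.single i 1 + d').degree = m + 1 := by rw [hsum]; exact hd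
    rw [Finsupp.degree_eq_weight_one] at h1 ⊢
    rw [map_add] at h1
    have : (Finsupp.weight fun _ => 1) (Finsupp.single i (1:ℕ)) = 1 := by
      simp [Finsupp.weight_apply, Finsupp.sum_single_index]
    omega
  refine ⟨i, d', hdeg, ?_⟩
  rw [X, monomial_mul, one_mul, hsum]

lemma quadPiece_one_le_span (I : Ideal (MvPolynomial (Fin n) k)) :
    quadPiece k n I 1 ≤
      Submodule.span k (Set.range fun i : Fin n => Ideal.Quotient.mk I (X i)) := by
  rintro x hx
  rw [mem_quadPiece] at hx
  obtain ⟨p, hp, rfl⟩ := hx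
  rw [p.as_sum, map_sum]
  apply Submodule.sum_mem
  intro d hd
  have hdeg : d.degree = 0 + 1 := by
    have := hp (mem_support_iff.mp hd)
    rw [Finsupp.degree_eq_weight_one]
    exact this
  obtain ⟨i, d', hd', heq⟩ := monomial_split hdeg (p.coeff d)
  rw [Finsupp.degree_eq_zero_iff] at hd'
  subst hd'
  have : (monomial (0 : Fin n →₀ ℕ) (p.coeff d) : MvPolynomial (Fin n) k) = C (p.coeff d) := rfl
  rw [heq, this, mul_comm, ← smul_eq_C_mul, ← Ideal.Quotient.mkₐ_eq_mk k, map_smul]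
  refine Submodule.smul_mem _ _ (Submodule.subset_span ⟨i, ?_⟩)
  rw [Ideal.Quotient.mkₐ_eq_mk]

instance quadPiece_one_fd (I : Ideal (MvPolynomial (Fin n) k)) :
    FiniteDimensional k (quadPiece k n I 1) := by
  haveI : FiniteDimensional k
      (Submodule.span k (Set.range fun i : Fin n => Ideal.Quotient.mk I (X i))) :=
    FiniteDimensional.span_of_finite k (Set.finite_range _)
  exact Submodule.finiteDimensional_of_le (quadPiece_one_le_span I)


lemma quadPiece_three_eq_bot
    (h : ∀ v ∈ quadPiece k n I 1, ∀ w ∈ quadPiece k n I 2, v * w = 0) :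
    quadPiece k n I 3 = ⊥ := by
  rw [eq_bot_iff]
  intro x hx
  rw [mem_quadPiece] at hx
  obtain ⟨p, hp, rfl⟩ := hx
  rw [Submodule.mem_bot, p.as_sum, map_sum]
  apply Finset.sum_eq_zero
  intro d hd
  have hdeg : d.degree = 2 + 1 := by
    have := hp (mem_support_iff.mp hd)
    rw [Finsupp.degree_eq_weight_one]
    exact this
  obtain ⟨i, d', hd', heq⟩ := monomial_split hdeg (p.coeff d)
  rw [heq, map_mul]
  refine h _ ?_ _ ?_
  · exact mem_quadPiece.mpr ⟨X i, isHomogeneous_X k i, rfl⟩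
  · exact mem_quadPiece.mpr ⟨monomial d' (p.coeff d),
      isHomogeneous_monomial _ hd', rfl⟩


end Aux

set_option maxHeartbeats 1000000 in
set_option synthInstance.maxHeartbeats 1000000 in
/-- Let `k` be algebraically closed and `R` a standard graded
quadratic `k`-algebra with `dim_k R_2 = 1`, no socle elements in degree one, and `R`
non-Artinian.  Then `dim_k R_1 = 1`, i.e. `R` is a polynomial ring in one variable. -/
theorem stmt_13 {k : Type*} [Field k] [IsAlgClosed k] (n : ℕ)
    (I : Ideal (MvPolynomial (Fin n) k))
    (hquad : ∃ S : Set (MvPolynomial (Fin n) k),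
      (∀ f ∈ S, f.IsHomogeneous 2) ∧ I = Ideal.span S)
    (hdim2 : Module.finrank k (quadPiece k n I 2) = 1)
    (hsocle : ∀ x ∈ quadPiece k n I 1, (∀ y ∈ quadPiece k n I 1, x * y = 0) → x = 0)
    (hnonArt : ∀ i : ℕ, quadPiece k n I i ≠ ⊥) :
    Module.finrank k (quadPiece k n I 1) = 1 := by
  clear hquad
  by_contra hne
  rcases Nat.lt_or_ge (Module.finrank k (quadPiece k n I 1)) 2 with hlt | hge
  · -- finrank = 0, so V = ⊥
    have h0 : Module.finrank k (quadPiece k n I 1) = 0 := by omega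
    exact hnonArt 1 (Submodule.finrank_eq_zero.mp h0)
  · -- finrank ≥ 2 : derive a contradiction
    -- a generator of the one-dimensional piece W = quadPiece 2
    obtain ⟨z, hz0, hzspan⟩ := finrank_eq_one_iff'.mp hdim2
    set zv : MvPolynomial (Fin n) k ⧸ I := (z : MvPolynomial (Fin n) k ⧸ I) with hzv
    have hzW : zv ∈ quadPiece k n I 2 := z.2
    have hzv0 : zv ≠ 0 := fun h => hz0 (Subtype.ext h)
    have hzspan' : ∀ w ∈ quadPiece k n I 2, ∃ c : k, c • zv = w := by
      intro w hw
      obtain ⟨c, hc⟩ := hzspan ⟨w, hw⟩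
      exact ⟨c, congrArg Subtype.val hc⟩
    -- two independent elements of V = quadPiece 1
    obtain ⟨e1, he1V, he10⟩ := Submodule.ne_bot_iff _ |>.mp (hnonArt 1)
    have hnotle : ¬ quadPiece k n I 1 ≤ Submodule.span k {e1} := by
      intro hle
      have h1 : Module.finrank k (Submodule.span k {e1}) = 1 :=
        finrank_span_singleton he10
      have := Submodule.finrank_mono (R := k) hle
      omega
    obtain ⟨e2, he2V, he2s⟩ := SetLike.not_le_iff_exists.mp hnotle
    have hind : ∀ a b : k, a • e1 + b • e2 = 0 → a = 0 ∧ b = 0 := by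
      intro a b hab
      rcases eq_or_ne b 0 with rfl | hb
      · rw [zero_smul, add_zero] at hab
        rcases smul_eq_zero.mp hab with ha | h
        · exact ⟨ha, rfl⟩
        · exact absurd h he10
      · exfalso
        apply he2s
        rw [Submodule.mem_span_singleton]
        refine ⟨-(b⁻¹ * a), ?_⟩
        have : e2 = b⁻¹ • (b • e2) := by rw [smul_smul, inv_mul_cancel₀ hb, one_smul]
        rw [this]
        have hb2 : b • e2 = -(a • e1) := by linear_combination (norm := module) hab
        rw [hb2, smul_neg, smul_smul, neg_smul]
    -- scalars of the quadratic form
    have h11 : (1 + 1 : ℕ) = 2 := rfl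
    have hmul2 : ∀ u v : MvPolynomial (Fin n) k ⧸ I, u ∈ quadPiece k n I 1 →
        v ∈ quadPiece k n I 1 → u * v ∈ quadPiece k n I 2 := by
      intro u v hu hv
      have := quadPiece_mul hu hv
      rwa [h11] at this
    obtain ⟨cA, hcA⟩ := hzspan' _ (hmul2 e1 e1 he1V he1V)
    obtain ⟨cB, hcB⟩ := hzspan' _ (hmul2 e1 e2 he1V he2V)
    obtain ⟨cD, hcD⟩ := hzspan' _ (hmul2 e2 e2 he2V he2V)
    -- find x ∈ V, x ≠ 0, x * x = 0
    obtain ⟨x, hxV, hx0, hxx⟩ :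
        ∃ x, x ∈ quadPiece k n I 1 ∧ x ≠ 0 ∧ x * x = 0 := by
      by_cases hA : cA = 0
      · exact ⟨e1, he1V, he10, by rw [← hcA, hA, zero_smul]⟩
      · obtain ⟨t, ht⟩ := IsAlgClosed.exists_root
          (Polynomial.C cA * Polynomial.X ^ 2 + Polynomial.C (2 * cB) * Polynomial.X
            + Polynomial.C cD)
          (by rw [Polynomial.degree_quadratic hA]; norm_num)
        have htv : cA * t ^ 2 + 2 * cB * t + cD = 0 := by
          simpa [Polynomial.IsRoot] using ht
        refine ⟨t • e1 + e2, ?_, ?_, ?_⟩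
        · exact Submodule.add_mem _ (Submodule.smul_mem _ _ he1V) he2V
        · intro h
          have := hind t 1 (by rw [one_smul]; exact h)
          exact one_ne_zero this.2
        · have hexp : (t • e1 + e2) * (t • e1 + e2)
              = (t * t) • (e1 * e1) + t • (e1 * e2) + (t • (e1 * e2) + e2 * e2) := by
            rw [add_mul, mul_add, mul_add, smul_mul_assoc, smul_mul_assoc, mul_smul_comm,
              smul_smul, mul_comm e2 (t • e1), smul_mul_assoc]
          rw [hexp, ← hcA, ← hcB, ← hcD]
          simp only [smul_smul, ← add_smul]
          convert zero_smul k zv using 2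
          linear_combination htv
    -- the socle hypothesis gives y with x * y ≠ 0
    have hy : ∃ y ∈ quadPiece k n I 1, x * y ≠ 0 := by
      by_contra h
      push_neg at h
      exact hx0 (hsocle x hxV h)
    obtain ⟨y, hyV, hxy0⟩ := hy
    obtain ⟨c0, hc0⟩ := hzspan' _ (hmul2 x y hxV hyV)
    have hc00 : c0 ≠ 0 := by
      intro h
      rw [h, zero_smul] at hc0
      exact hxy0 hc0.symm
    -- every element of W is x times an element of V
    have hW : ∀ w ∈ quadPiece k n I 2, ∃ v ∈ quadPiece k n I 1, w = x * v := by
      intro w hw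
      obtain ⟨c, hc⟩ := hzspan' w hw
      refine ⟨(c * c0⁻¹) • y, Submodule.smul_mem _ _ hyV, ?_⟩
      rw [mul_smul_comm, ← hc0, smul_smul, ← hc]
      congr 1
      field_simp
    -- V * W = 0
    have hVW : ∀ v ∈ quadPiece k n I 1, ∀ w ∈ quadPiece k n I 2, v * w = 0 := by
      intro v hv w hw
      obtain ⟨v1, hv1, rfl⟩ := hW w hw
      obtain ⟨v2, _, hv2⟩ := hW _ (hmul2 v v1 hv hv1)
      calc v * (x * v1) = x * (v * v1) := by ring
        _ = x * (x * v2) := by rw [hv2]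
        _ = (x * x) * v2 := by ring
        _ = 0 := by rw [hxx, zero_mul]
    exact hnonArt 3 (quadPiece_three_eq_bot hVW)
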